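/- arXiv:2111.05741 — 5 statements merged into one kernel-verified Lean document; each statement's English description precedes it below -/
import Mathlib

section
/- Let A → B be a flat local homomorphism of Artinian local rings. Then length_B(B) = length_A(A) · length_{B}(B/m_A B), where m_A is the maximal ideal of A. -/
/-- The length of a module, defined as the Krull dimension of its lattice of submodules. -/
noncomputable def moduleLength (R M : Type*) [Ring R] [AddCommGroup M] [Module R M] :
    WithBot ℕ∞ :=
  Order.krullDim (Submodule R M)

section Core

universe u v

variable {R : Type*} [Ring R]

/-- Length as an `ℕ∞`-valued quantity: the height of `⊤` in the submodule lattice. -/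
noncomputable def modLen (R M : Type*) [Ring R] [AddCommGroup M] [Module R M] : ℕ∞ :=
  Order.height (⊤ : Submodule R M)

lemma moduleLength_eq_modLen (R M : Type*) [Ring R] [AddCommGroup M] [Module R M] :
    moduleLength R M = (modLen R M : WithBot ℕ∞) :=
  (Order.height_top_eq_krullDim).symm

variable {M M' : Type*} [AddCommGroup M] [Module R M] [AddCommGroup M'] [Module R M']

lemma modLen_congr (e : M ≃ₗ[R] M') : modLen R M = modLen R M' := by
  have h := Order.krullDim_eq_of_orderIso (Submodule.orderIsoMapComap e)
  rw [← moduleLength, ← moduleLength, moduleLength_eq_modLen, moduleLength_eq_modLen] at h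
  exact_mod_cast h

lemma modLen_subsingleton [Subsingleton M] : modLen R M = 0 := by
  rw [modLen, Order.height_eq_zero]
  intro b _
  exact (Subsingleton.elim _ _ : (⊤ : Submodule R M) = b).le

lemma modLen_simple [IsSimpleModule R M] : modLen R M = 1 := by
  refine le_antisymm ?_ (ENat.one_le_iff_ne_zero.mpr ?_)
  · rw [modLen, show (1 : ℕ∞) = ((1 : ℕ) : ℕ∞) by norm_cast, Order.height_le_coe_iff]
    intro y hy
    have : y = ⊥ := by
      rcases eq_bot_or_eq_top y with h | h
      · exact h
      · exact absurd h hy.ne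
    subst this
    simp
  · intro h0
    have hmin : IsMin (⊤ : Submodule R M) := Order.height_eq_zero.mp h0
    exact bot_ne_top (le_antisymm (hmin bot_le) le_top).symm

lemma comap_lt_or_map_lt (N : Submodule R M) {x y : Submodule R M} (hxy : x < y) :
    Submodule.comap N.subtype x < Submodule.comap N.subtype y ∨
      Submodule.map N.mkQ x < Submodule.map N.mkQ y := by
  by_contra hc
  push_neg at hc
  obtain ⟨h1, h2⟩ := hc
  have e1 : Submodule.comap N.subtype x = Submodule.comap N.subtype y :=
    ((Submodule.comap_mono hxy.le).lt_or_eq).resolve_left h1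
  have e2 : Submodule.map N.mkQ x = Submodule.map N.mkQ y :=
    ((Submodule.map_mono hxy.le).lt_or_eq).resolve_left h2
  have hyx : y ≤ x := by
    intro m hm
    have : N.mkQ m ∈ Submodule.map N.mkQ x := by
      rw [e2]; exact Submodule.mem_map_of_mem hm
    obtain ⟨m', hm', hmm⟩ := this
    have hd : m' - m ∈ N := by
      rwa [Submodule.mkQ_apply, Submodule.mkQ_apply, Submodule.Quotient.eq] at hmm
    have hsub : (⟨m' - m, hd⟩ : N) ∈ Submodule.comap N.subtype x := by
      rw [e1]
      exact Submodule.mem_comap.mpr (Submodule.sub_mem _ (hxy.le hm') hm)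
    have : m' - m ∈ x := hsub
    have := Submodule.sub_mem _ hm' this
    simpa using this
  exact absurd (le_antisymm hxy.le hyx) hxy.ne

lemma chain_le (N : Submodule R M) (p : LTSeries (Submodule R M)) :
    (p.length : ℕ∞) ≤ Order.height (Submodule.comap N.subtype p.last)
      + Order.height (Submodule.map N.mkQ p.last) := by
  suffices H : ∀ n (p : LTSeries (Submodule R M)), p.length = n →
      (p.length : ℕ∞) ≤ Order.height (Submodule.comap N.subtype p.last)
        + Order.height (Submodule.map N.mkQ p.last) from H _ p rfl
  intro n
  induction n with
  | zero => intro p hp; rw [hp]; simp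
  | succ n ih =>
    intro p hp
    have hne : p.length ≠ 0 := by omega
    have hlt : p.eraseLast.last < p.last := p.eraseLast_last_rel_last hne
    have hIH := ih p.eraseLast (by simp [RelSeries.eraseLast_length, hp])
    rw [RelSeries.eraseLast_length, hp] at hIH
    simp only [Nat.add_sub_cancel] at hIH
    rw [hp]
    push_cast
    rcases comap_lt_or_map_lt N hlt with h | h
    · by_cases htop : Order.height (Submodule.comap N.subtype p.last) = ⊤
      · rw [htop, top_add]; exact le_top
      · have hfin : Order.height (Submodule.comap N.subtype p.eraseLast.last) < ⊤ :=
          lt_of_le_of_lt (Order.height_mono h.le) (lt_top_iff_ne_top.mpr htop)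
        have h1 : Order.height (Submodule.comap N.subtype p.eraseLast.last) + 1 ≤
            Order.height (Submodule.comap N.subtype p.last) :=
          Order.add_one_le_of_lt (Order.height_strictMono h hfin)
        have h2 : Order.height (Submodule.map N.mkQ p.eraseLast.last) ≤
            Order.height (Submodule.map N.mkQ p.last) :=
          Order.height_mono (Submodule.map_mono hlt.le)
        calc (n : ℕ∞) + 1
            ≤ (Order.height (Submodule.comap N.subtype p.eraseLast.last)
                + Order.height (Submodule.map N.mkQ p.eraseLast.last)) + 1 := by
              exact add_le_add hIH le_rfl
          _ = (Order.height (Submodule.comap N.subtype p.eraseLast.last) + 1)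
                + Order.height (Submodule.map N.mkQ p.eraseLast.last) := by
              rw [add_right_comm]
          _ ≤ _ := add_le_add h1 h2
    · by_cases htop : Order.height (Submodule.map N.mkQ p.last) = ⊤
      · rw [htop, add_top]; exact le_top
      · have hfin : Order.height (Submodule.map N.mkQ p.eraseLast.last) < ⊤ :=
          lt_of_le_of_lt (Order.height_mono h.le) (lt_top_iff_ne_top.mpr htop)
        have h1 : Order.height (Submodule.map N.mkQ p.eraseLast.last) + 1 ≤
            Order.height (Submodule.map N.mkQ p.last) :=
          Order.add_one_le_of_lt (Order.height_strictMono h hfin)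
        have h2 : Order.height (Submodule.comap N.subtype p.eraseLast.last) ≤
            Order.height (Submodule.comap N.subtype p.last) :=
          Order.height_mono (Submodule.comap_mono hlt.le)
        calc (n : ℕ∞) + 1
            ≤ (Order.height (Submodule.comap N.subtype p.eraseLast.last)
                + Order.height (Submodule.map N.mkQ p.eraseLast.last)) + 1 := by
              exact add_le_add hIH le_rfl
          _ = Order.height (Submodule.comap N.subtype p.eraseLast.last)
                + (Order.height (Submodule.map N.mkQ p.eraseLast.last) + 1) := by
              rw [add_assoc]
          _ ≤ _ := add_le_add h2 h1

lemma modLen_le_add (N : Submodule R M) :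
    modLen R M ≤ modLen R N + modLen R (M ⧸ N) := by
  rw [modLen]
  apply Order.height_le
  intro p hlast
  have h := chain_le N p
  rw [hlast] at h
  rwa [Submodule.comap_top, Submodule.map_top, Submodule.range_mkQ] at h

lemma add_le_modLen (N : Submodule R M) {n m : ℕ}
    (hn : (n : ℕ∞) ≤ modLen R N) (hm : (m : ℕ∞) ≤ modLen R (M ⧸ N)) :
    ((n + m : ℕ) : ℕ∞) ≤ modLen R M := by
  obtain ⟨q, hqlast, hqlen⟩ := Order.exists_series_of_le_height _ hn
  obtain ⟨r, hrlast, hrlen⟩ := Order.exists_series_of_le_height _ hm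
  have hmapsub : StrictMono (Submodule.map N.subtype) :=
    Submodule.map_strictMono_of_injective N.injective_subtype
  have hcomapmkq : StrictMono (Submodule.comap N.mkQ) :=
    Submodule.comap_strictMono_of_surjective N.mkQ_surjective
  set q' : LTSeries (Submodule R M) := q.map _ hmapsub with hq'
  set r' : LTSeries (Submodule R M) := r.map _ hcomapmkq with hr'
  have hq'len : q'.length = n := hqlen
  have hr'len : r'.length = m := hrlen
  have hq'last : q'.last = N := by
    rw [hq', LTSeries.last_map, hqlast, Submodule.map_top, Submodule.range_subtype]
  have hr'head : N ≤ r'.head := by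
    rw [hr', LTSeries.head_map]
    exact Submodule.le_comap_mkQ N r.head
  have hr'last : r'.last = ⊤ := by
    rw [hr', LTSeries.last_map, hrlast, Submodule.comap_top]
  have key : ∃ s : LTSeries (Submodule R M), s.last = ⊤ ∧ n + m ≤ s.length := by
    by_cases hc : q'.last = r'.head
    · refine ⟨q'.smash r' hc, by rwa [RelSeries.last_smash], ?_⟩
      have : (q'.smash r' hc).length = q'.length + r'.length := RelSeries.smash_length q' r' hc
      rw [this, hq'len, hr'len]
    · have hconn : q'.last < r'.head := lt_of_le_of_ne (hq'last ▸ hr'head) hc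
      refine ⟨q'.append r' hconn, ?_, ?_⟩
      · rwa [RelSeries.last_append]
      · have : (q'.append r' hconn).length = q'.length + r'.length + 1 :=
          RelSeries.append_length q' r' hconn
        rw [this, hq'len, hr'len]
        omega
  obtain ⟨s, hslast, hslen⟩ := key
  calc ((n + m : ℕ) : ℕ∞) ≤ (s.length : ℕ∞) := by exact_mod_cast hslen
    _ ≤ Order.height s.last := Order.length_le_height_last
    _ = modLen R M := by rw [hslast, modLen]

lemma modLen_add (N : Submodule R M) (h1 : modLen R N ≠ ⊤) (h2 : modLen R (M ⧸ N) ≠ ⊤) :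
    modLen R M = modLen R N + modLen R (M ⧸ N) := by
  refine le_antisymm (modLen_le_add N) ?_
  obtain ⟨n, hn⟩ := WithTop.ne_top_iff_exists.mp h1
  obtain ⟨m, hm⟩ := WithTop.ne_top_iff_exists.mp h2
  rw [← hn, ← hm]
  have := add_le_modLen N (le_of_eq hn) (le_of_eq hm)
  push_cast at this ⊢
  exact this

lemma modLen_ne_top : ∀ {M : Type v} [AddCommGroup M] [Module R M],
    IsFiniteLength R M → modLen R M ≠ ⊤ := by
  intro M _ _ h
  induction h with
  | of_subsingleton => rw [modLen_subsingleton]; simp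
  | @of_simple_quotient M _ _ N _ hN ih =>
    refine ne_top_of_le_ne_top ?_ (modLen_le_add N)
    rw [modLen_simple (M := M ⧸ N)]
    exact WithTop.add_ne_top.mpr ⟨ih, (by simp : (1 : ℕ∞) ≠ ⊤)⟩

end Core

section ArtinianLocal

/-- A module killed by the maximal ideal of a local ring, which is Artinian, is Noetherian. -/
lemma isNoetherian_of_isArtinian_of_torsion {A : Type*} [CommRing A] [IsLocalRing A]
    {Q : Type*} [AddCommGroup Q] [Module A Q] [IsArtinian A Q]
    (hT : Module.IsTorsionBySet A Q (IsLocalRing.maximalIdeal A)) : IsNoetherian A Q := by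
  letI instQ : Module (A ⧸ IsLocalRing.maximalIdeal A) Q := hT.module
  letI : Field (A ⧸ IsLocalRing.maximalIdeal A) := Ideal.Quotient.field _
  haveI htower : IsScalarTower A (A ⧸ IsLocalRing.maximalIdeal A) Q := hT.isScalarTower
  haveI hart : IsArtinian (A ⧸ IsLocalRing.maximalIdeal A) Q := isArtinian_of_tower A inferInstance
  haveI hss : IsSemisimpleModule (A ⧸ IsLocalRing.maximalIdeal A) Q := inferInstance
  haveI hnoe : IsNoetherian (A ⧸ IsLocalRing.maximalIdeal A) Q :=
    (IsSemisimpleModule.finite_tfae.out 2 1).mp hart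
  -- transfer Noetherianity back along the carrier-preserving embedding of submodule lattices
  let emb : Submodule A Q ↪o Submodule (A ⧸ IsLocalRing.maximalIdeal A) Q :=
    { toFun := fun p =>
        { carrier := p
          add_mem' := fun h1 h2 => p.add_mem h1 h2
          zero_mem' := p.zero_mem
          smul_mem' := by
            intro c x hx
            obtain ⟨a, rfl⟩ := Ideal.Quotient.mk_surjective c
            have : (Ideal.Quotient.mk (IsLocalRing.maximalIdeal A) a) • x = a • x := hT.mk_smul a x
            rw [this]
            exact p.smul_mem a hx }
      inj' := by
        intro p q h
        ext x
        exact SetLike.ext_iff.mp h x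
      map_rel_iff' := by
        intro p q
        constructor
        · intro h x hx; exact h hx
        · intro h x hx; exact h hx }
  exact isNoetherian_mk ⟨OrderEmbedding.wellFounded emb.dual hnoe.wf⟩

/-- A commutative Artinian local ring is Noetherian (baby Hopkins–Levitzki). -/
lemma isNoetherian_self_of_artinian_local (A : Type*) [CommRing A] [IsLocalRing A]
    [IsArtinianRing A] : IsNoetherian A A := by
  obtain ⟨n, hn⟩ : IsNilpotent (IsLocalRing.maximalIdeal A) := by
    have h := IsArtinianRing.isNilpotent_jacobson_bot (R := A)
    rwa [IsLocalRing.jacobson_eq_maximalIdeal ⊥ bot_ne_top] at h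
  set m := IsLocalRing.maximalIdeal A with hm
  have key : ∀ i : ℕ, IsNoetherian A ↥(m ^ (n - i) : Ideal A) := by
    intro i
    induction i with
    | zero =>
      simp only [Nat.sub_zero]
      show IsNoetherian A ↥(m ^ n : Ideal A)
      rw [hn]
      haveI : Subsingleton ↥((⊥ : Ideal A)) := by
        constructor; rintro ⟨x, hx⟩ ⟨y, hy⟩
        simp only [Submodule.mem_bot] at hx hy
        subst hx; subst hy; rfl
      infer_instance
    | succ i ih =>
      rcases le_or_gt n i with hni | hni
      · have : n - (i + 1) = n - i := by omega
        rw [this]; exact ih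
      · have hstep : n - i = (n - (i+1)) + 1 := by omega
        set j := n - (i + 1) with hj
        rw [hstep] at ih
        -- show IsNoetherian A ↥(m ^ j) from IsNoetherian A ↥(m ^ (j+1))
        set N : Submodule A ↥(m ^ j : Ideal A) :=
          Submodule.comap (m ^ j : Ideal A).subtype
            (Submodule.restrictScalars A (m ^ (j+1) : Ideal A)) with hN
        have hle : (m ^ (j+1) : Ideal A) ≤ (m ^ j : Ideal A) :=
          Ideal.pow_le_pow_right (by omega)
        haveI hNn : IsNoetherian A ↥N :=
          isNoetherian_of_linearEquiv (Submodule.comapSubtypeEquivOfLe hle).symm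
        have hQart : IsArtinian A (↥(m ^ j : Ideal A) ⧸ N) := inferInstance
        have hQtor : Module.IsTorsionBySet A (↥(m ^ j : Ideal A) ⧸ N) m := by
          rw [Module.isTorsionBySet_quotient_iff]
          intro x r hr
          have hx : (x : A) ∈ (m ^ j : Ideal A) := x.2
          have hmul : (x : A) * r ∈ (m ^ j : Ideal A) * m := Ideal.mul_mem_mul hx hr
          have : r • (x : A) ∈ (m ^ (j+1) : Ideal A) := by
            rw [pow_succ, smul_eq_mul, mul_comm r (x : A)]
            exact hmul
          exact this
        haveI hQnoe : IsNoetherian A (↥(m ^ j : Ideal A) ⧸ N) :=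
          isNoetherian_of_isArtinian_of_torsion hQtor
        exact (isNoetherian_iff_submodule_quotient N).mpr ⟨hNn, hQnoe⟩
  have h0 := key n
  rw [Nat.sub_self, pow_zero, Ideal.one_eq_top] at h0
  exact isNoetherian_of_linearEquiv Submodule.topEquiv

end ArtinianLocal

section Tensor

open TensorProduct

universe u v w

variable (A : Type u) (B : Type v) [CommRing A] [CommRing B] [IsLocalRing A] [IsLocalRing B]
  [Algebra A B] [Module.Flat A B] [IsArtinianRing B]

/-- Base change of a linear equivalence. -/
noncomputable def LinearEquiv.myBaseChange {M M' : Type*} [AddCommGroup M] [Module A M]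
    [AddCommGroup M'] [Module A M'] (e : M ≃ₗ[A] M') :
    (B ⊗[A] M) ≃ₗ[B] (B ⊗[A] M') :=
  LinearEquiv.ofLinear (e.toLinearMap.baseChange B) (e.symm.toLinearMap.baseChange B)
    (by rw [← LinearMap.baseChange_comp]; simp [LinearMap.baseChange_id])
    (by rw [← LinearMap.baseChange_comp]; simp [LinearMap.baseChange_id])

lemma modLen_ne_top_of_finite (X : Type*) [AddCommGroup X] [Module B X] [Module.Finite B X] :
    modLen B X ≠ ⊤ := by
  haveI : IsNoetherianRing B := isNoetherian_self_of_artinian_local B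
  haveI : IsNoetherian B X := by
    haveI : IsNoetherian B ↥(⊤ : Submodule B X) :=
      isNoetherian_of_fg_of_noetherian _ (Module.finite_def.mp inferInstance)
    exact isNoetherian_of_linearEquiv Submodule.topEquiv
  exact modLen_ne_top (isFiniteLength_iff_isNoetherian_isArtinian.mpr
    ⟨inferInstance, inferInstance⟩)

lemma key_lemma : ∀ {M : Type w} [AddCommGroup M] [Module A M], IsFiniteLength A M →
    modLen B (B ⊗[A] M) =
      modLen A M * modLen B (B ⊗[A] (A ⧸ IsLocalRing.maximalIdeal A)) := by
  have hcne : modLen B (B ⊗[A] (A ⧸ IsLocalRing.maximalIdeal A)) ≠ ⊤ :=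
    modLen_ne_top_of_finite B _
  intro M _ _ h
  induction h with
  | of_subsingleton =>
    rw [modLen_subsingleton, modLen_subsingleton, zero_mul]
  | @of_simple_quotient M _ _ N _ hN ih =>
    set c := modLen B (B ⊗[A] (A ⧸ IsLocalRing.maximalIdeal A)) with hc
    have hNfin : modLen A N ≠ ⊤ := modLen_ne_top hN
    -- the simple quotient is isomorphic to A ⧸ m
    obtain ⟨I, hImax, ⟨e⟩⟩ :=
      isSimpleModule_iff_quot_maximal.mp (inferInstance : IsSimpleModule A (M ⧸ N))
    have hI : I = IsLocalRing.maximalIdeal A := IsLocalRing.eq_maximalIdeal hImax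
    subst hI
    -- the base-changed exact sequence
    set f := N.subtype.baseChange B with hf
    set g := N.mkQ.baseChange B with hg
    have hffun : ⇑f = ⇑(LinearMap.lTensor B N.subtype) := LinearMap.baseChange_eq_ltensor N.subtype
    have hgfun : ⇑g = ⇑(LinearMap.lTensor B N.mkQ) := LinearMap.baseChange_eq_ltensor N.mkQ
    have hfinj : Function.Injective f := by
      rw [hffun]
      exact Module.Flat.lTensor_preserves_injective_linearMap N.subtype N.injective_subtype
    have hgsurj : Function.Surjective g := by
      rw [hgfun]
      exact LinearMap.lTensor_surjective B (Submodule.mkQ_surjective N)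
    have hker : LinearMap.ker g = LinearMap.range f := by
      have hk := lTensor_mkQ B N
      ext x
      have hmem : x ∈ LinearMap.ker (LinearMap.lTensor B N.mkQ) ↔
          x ∈ LinearMap.range (LinearMap.lTensor B N.subtype) := by rw [hk]
      simp only [LinearMap.mem_ker, LinearMap.mem_range] at hmem ⊢
      rw [hgfun]
      refine hmem.trans ⟨?_, ?_⟩
      · rintro ⟨y, hy⟩; exact ⟨y, by rw [congrFun hffun y]; exact hy⟩
      · rintro ⟨y, hy⟩; exact ⟨y, by rw [← congrFun hffun y]; exact hy⟩
    have e1 : (B ⊗[A] ↥N) ≃ₗ[B] ↥(LinearMap.range f) := LinearEquiv.ofInjective f hfinj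
    have e2 : ((B ⊗[A] M) ⧸ LinearMap.ker g) ≃ₗ[B] (B ⊗[A] (M ⧸ N)) :=
      g.quotKerEquivOfSurjective hgsurj
    have e3 : (B ⊗[A] (M ⧸ N)) ≃ₗ[B] (B ⊗[A] (A ⧸ IsLocalRing.maximalIdeal A)) :=
      LinearEquiv.myBaseChange A B e
    have hrange : modLen B ↥(LinearMap.range f) = modLen A ↥N * c := by
      rw [← modLen_congr e1, ih]
    have hquot : modLen B ((B ⊗[A] M) ⧸ LinearMap.range f) = c := by
      rw [← hker, modLen_congr e2, modLen_congr e3]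
    have hrange_ne : modLen B ↥(LinearMap.range f) ≠ ⊤ := by
      rw [hrange]; exact WithTop.mul_ne_top hNfin hcne
    have hquot_ne : modLen B ((B ⊗[A] M) ⧸ LinearMap.range f) ≠ ⊤ := by
      rw [hquot]; exact hcne
    have hadd := modLen_add (LinearMap.range f) hrange_ne hquot_ne
    rw [hadd, hrange, hquot]
    have hsimp : modLen A (M ⧸ N) = 1 := modLen_simple
    have hAM : modLen A M = modLen A ↥N + 1 := by
      rw [modLen_add N hNfin (by rw [hsimp]; exact (by simp : (1 : ℕ∞) ≠ ⊤)), hsimp]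
    rw [hAM, add_mul, one_mul]

end Tensor

/-- Let `A → B` be a flat local homomorphism of Artinian local rings.  Then
`length_B B = length_A A * length_B (B ⧸ m_A B)`. -/
theorem stmt4 (A B : Type*) [CommRing A] [CommRing B]
    [IsLocalRing A] [IsLocalRing B] [IsArtinianRing A] [IsArtinianRing B]
    [Algebra A B] [Module.Flat A B] [IsLocalHom (algebraMap A B)] :
    moduleLength B B =
      moduleLength A A *
        moduleLength B (B ⧸ (Ideal.map (algebraMap A B) (IsLocalRing.maximalIdeal A))) := by
  classical
  set m : Ideal A := IsLocalRing.maximalIdeal A with hmdef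
  set J : Ideal B := Ideal.map (algebraMap A B) m with hJdef
  haveI : IsNoetherian A A := isNoetherian_self_of_artinian_local A
  have hflA : IsFiniteLength A A :=
    isFiniteLength_iff_isNoetherian_isArtinian.mpr ⟨inferInstance, inferInstance⟩
  have h1 := key_lemma A B hflA
  -- identify B ⊗[A] A with B
  let eBA : (TensorProduct A B A) ≃ₗ[B] B := TensorProduct.AlgebraTensorModule.rid A B B
  have hBB : modLen B B = modLen A A * modLen B (TensorProduct A B (A ⧸ m)) := by
    rw [← modLen_congr eBA]
    exact h1
  -- identify B ⊗[A] (A ⧸ m) with B ⧸ J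
  let g0 : (TensorProduct A B A) →ₗ[B] (TensorProduct A B (A ⧸ m)) :=
    (Submodule.mkQ (m : Submodule A A)).baseChange B
  let g : B →ₗ[B] (TensorProduct A B (A ⧸ m)) := g0 ∘ₗ (eBA.symm : B →ₗ[B] TensorProduct A B A)
  have hg0surj : Function.Surjective g0 := by
    have h : Function.Surjective (LinearMap.lTensor B (Submodule.mkQ (m : Submodule A A))) :=
      LinearMap.lTensor_surjective B (Submodule.mkQ_surjective _)
    have heq : ⇑g0 = ⇑(LinearMap.lTensor B (Submodule.mkQ (m : Submodule A A))) :=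
      LinearMap.baseChange_eq_ltensor _
    show Function.Surjective ⇑g0
    rw [heq]
    exact h
  have hgsurj : Function.Surjective g := hg0surj.comp eBA.symm.surjective
  have hgapply : ∀ b : B, g b = b ⊗ₜ[A] (Submodule.Quotient.mk (1 : A)) := by
    intro b
    show g0 (eBA.symm b) = _
    rw [show eBA.symm b = b ⊗ₜ[A] (1 : A) from TensorProduct.AlgebraTensorModule.rid_symm_apply A (A := B) b]
    rw [LinearMap.baseChange_tmul]
    rfl
  have hker : LinearMap.ker g = J := by
    ext b
    rw [LinearMap.mem_ker, hgapply]
    set E := TensorProduct.tensorQuotEquivQuotSMul B m with hE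
    have hEapp : E (b ⊗ₜ[A] Submodule.Quotient.mk (1 : A)) = Submodule.Quotient.mk b := by
      rw [hE]
      show (TensorProduct.quotTensorEquivQuotSMul B m)
        ((TensorProduct.comm A B (A ⧸ m)) (b ⊗ₜ[A] Submodule.Quotient.mk (1 : A))) = _
      rw [TensorProduct.comm_tmul]
      have := TensorProduct.quotTensorEquivQuotSMul_mk_tmul (M := B) m 1 b
      rw [show (Ideal.Quotient.mk m 1 : A ⧸ m) = Submodule.Quotient.mk (1 : A) from rfl] at this
      rw [this, one_smul]
    rw [← E.map_eq_zero_iff, hEapp, Submodule.Quotient.mk_eq_zero, Ideal.smul_top_eq_map]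
    exact Iff.rfl
  have hc2 : modLen B (B ⧸ J) = modLen B (TensorProduct A B (A ⧸ m)) := by
    have h := modLen_congr (g.quotKerEquivOfSurjective hgsurj)
    rwa [hker] at h
  rw [moduleLength_eq_modLen, moduleLength_eq_modLen, moduleLength_eq_modLen, ← WithBot.coe_mul,
    WithBot.coe_inj]
  rw [hBB, hc2]
end

section
/- Let Π be a weighted rational polyhedral complex of dimension d in ℝ^m with integer weights m_σ on its d-dimensional faces, and let φ : |Π| → ℝ be a function that is affine with integral linear part on each face of Π. Let Π′ be the graph of φ in ℝ^m × ℝ, with each d-face σ′ = {(x, φ(x)) : x ∈ σ} given the weight m_σ. Then Π′ is balanced (at every (d−1)-dimensional face) if and only if Π is balanced and the tropical Weil divisor div(φ) is zero. -/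
/-- Local combinatorial model of a weighted rational polyhedral complex `Π`
of dimension `d` in `ℝ^m` together with a function `φ` that is affine on each face:
* `T` indexes the `(d-1)`-dimensional faces `τ`, `D` the `d`-dimensional faces `σ`;
* `adj t` is the set of `d`-faces containing the `(d-1)`-face `t`;
* `wt σ` is the integer weight `m_σ`;
* `w t σ` is the primitive inward lattice generator `ω_{σ,τ}`;
* `L t` is the linear span `L_τ` of `τ`;
* `u σ` (resp. `uτ t`) is the linear part of `φ` on the face `σ` (resp. `τ`); continuity of
  `φ` across `τ` is the compatibility `u σ = uτ t` on `L t`.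

The graph complex `Π′ ⊂ ℝ^m × ℝ` has faces with primitive vectors `(ω_{σ,τ}, ∂φ/∂ω_{σ,τ})`
over the linear spans `{(v, uτ v) : v ∈ L_τ}` and the same weights.  Then `Π′` is balanced
at every `(d-1)`-face if and only if `Π` is balanced and the tropical Weil divisor
`div(φ)` vanishes. -/
theorem stmt6 (m : ℕ) (D T : Type*) [Fintype D]
    (adj : T → Finset D) (wt : D → ℤ)
    (w : T → D → (Fin m → ℝ))
    (L : T → Submodule ℝ (Fin m → ℝ))
    (u : D → ((Fin m → ℝ) →ₗ[ℝ] ℝ)) (uτ : T → ((Fin m → ℝ) →ₗ[ℝ] ℝ))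
    (hcompat : ∀ t : T, ∀ σ ∈ adj t, ∀ v ∈ L t, u σ v = uτ t v) :
    -- balancing of the graph complex `Π′` at every `(d-1)`-face
    (∀ t : T,
        (∑ σ ∈ adj t, wt σ • ((w t σ, u σ (w t σ)) : (Fin m → ℝ) × ℝ)) ∈
          (L t).map (LinearMap.prod (LinearMap.id) (uτ t))) ↔
      -- balancing of `Π` ...
      ((∀ t : T, (∑ σ ∈ adj t, wt σ • w t σ) ∈ L t) ∧
      -- ... together with the vanishing of the corner-locus multiplicities of `φ`
       (∀ t : T,
          ∑ σ ∈ adj t, (wt σ : ℝ) * u σ (w t σ) =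
            uτ t (∑ σ ∈ adj t, wt σ • w t σ))) := by
  have key : ∀ t : T,
      (∑ σ ∈ adj t, wt σ • ((w t σ, u σ (w t σ)) : (Fin m → ℝ) × ℝ)) =
        ((∑ σ ∈ adj t, wt σ • w t σ), ∑ σ ∈ adj t, (wt σ : ℝ) * u σ (w t σ)) := by
    intro t
    rw [Prod.ext_iff]
    constructor
    · simp [Prod.fst_sum]
    · simp [Prod.snd_sum, zsmul_eq_mul]
  constructor
  · intro h
    constructor
    · intro t
      obtain ⟨v, hv, hveq⟩ := h t
      rw [key t, Prod.ext_iff] at hveq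
      simp only [LinearMap.prod_apply, LinearMap.id_coe, id_eq, Pi.prod] at hveq
      exact hveq.1 ▸ hv
    · intro t
      obtain ⟨v, hv, hveq⟩ := h t
      rw [key t, Prod.ext_iff] at hveq
      simp only [LinearMap.prod_apply, LinearMap.id_coe, id_eq, Pi.prod] at hveq
      rw [← hveq.2, ← hveq.1]
      rfl
  · rintro ⟨h1, h2⟩ t
    refine ⟨∑ σ ∈ adj t, wt σ • w t σ, h1 t, ?_⟩
    rw [key t]
    simp only [LinearMap.prod_apply, LinearMap.id_coe, id_eq, Pi.prod]
    exact Prod.ext rfl (h2 t).symm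
end

section
/- Let Π be a balanced weighted rational polyhedral complex of dimension d in ℝ^m and let L : |Π| → ℝⁿ be given by L(x) = (φ₁(x),…,φ_n(x)) where each φ_i is piecewise affine with integral linear part and has vanishing tropical Weil divisor: div(φ_i) = 0. Then the graph Π′ = Γ_Π(L) ⊂ ℝ^m × ℝⁿ, with weights transported from Π via the canonical isomorphism ι : Π → Π′, is a balanced weighted rational polyhedral complex of dimension d, and L = p₂ ∘ ι where p₂ is the projection onto ℝⁿ. -/
/-- Local combinatorial model as in the previous statements: `T` indexes the
`(d-1)`-faces and `D` the `d`-faces of a balanced weighted rational polyhedral complex `Π`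
in `ℝ^m`; `u i`/`uτ i` encode the linear parts of the piecewise affine coordinate functions
`φ_i` (`i = 1, …, n`) of the map `L = (φ₁, …, φ_n) : |Π| → ℝⁿ`, each of which has vanishing
tropical Weil divisor.  Then the graph complex `Π′ = Γ_Π(L) ⊂ ℝ^m × ℝⁿ`, with primitive
vectors `(ω_{σ,τ}, (∂φ_i/∂ω_{σ,τ})_i)`, linear spans `{(v, (uτ_i v)_i) : v ∈ L_τ}`, and the
weights transported from `Π` via the canonical isomorphism `ι : x ↦ (x, L x)`, is balanced
(of dimension `d`); moreover `L = p₂ ∘ ι` for the second projection `p₂`. -/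
theorem stmt8 (m nn : ℕ) (D T : Type*) [Fintype D]
    (adj : T → Finset D) (wt : D → ℤ)
    (w : T → D → (Fin m → ℝ))
    (L : T → Submodule ℝ (Fin m → ℝ))
    (u : Fin nn → D → ((Fin m → ℝ) →ₗ[ℝ] ℝ))
    (uτ : Fin nn → T → ((Fin m → ℝ) →ₗ[ℝ] ℝ))
    (hcompat : ∀ i : Fin nn, ∀ t : T, ∀ σ ∈ adj t, ∀ v ∈ L t, u i σ v = uτ i t v)
    (hbal : ∀ t : T, (∑ σ ∈ adj t, wt σ • w t σ) ∈ L t)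
    (hdiv : ∀ i : Fin nn, ∀ t : T,
      ∑ σ ∈ adj t, (wt σ : ℝ) * u i σ (w t σ) = uτ i t (∑ σ ∈ adj t, wt σ • w t σ))
    (Lfun : (Fin m → ℝ) → (Fin nn → ℝ)) :
    -- the graph complex `Γ_Π(L)` is balanced at every `(d-1)`-face ...
    (∀ t : T,
        (∑ σ ∈ adj t,
            wt σ • ((w t σ, fun i => u i σ (w t σ)) : (Fin m → ℝ) × (Fin nn → ℝ))) ∈
          (L t).map (LinearMap.prod (LinearMap.id)
            (LinearMap.pi (fun i : Fin nn => uτ i t)))) ∧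
      -- ... and `L = p₂ ∘ ι` for `ι : x ↦ (x, L x)`
      (∀ x : Fin m → ℝ, Prod.snd ((x, Lfun x) : (Fin m → ℝ) × (Fin nn → ℝ)) = Lfun x) := by
  refine ⟨fun t => ?_, fun x => rfl⟩
  refine ⟨∑ σ ∈ adj t, wt σ • w t σ, hbal t, ?_⟩
  simp only [LinearMap.prod_apply, LinearMap.id_coe, id_eq, Pi.prod, LinearMap.pi_apply]
  rw [Prod.ext_iff]
  constructor
  · simp [Prod.fst_sum]
  · simp only [Prod.snd_sum, Prod.smul_mk]
    funext i
    show (LinearMap.pi fun i => uτ i t) (∑ σ ∈ adj t, wt σ • w t σ) i = _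
    rw [LinearMap.pi_apply, ← hdiv i t]
    simp [Finset.sum_apply, mul_comm, zsmul_eq_mul]
end

section
/- Let Γ ⊆ ℝ be a dense additive subgroup containing nonzero elements, and let σ ⊂ ℝⁿ be a polytope cut out by finitely many inequalities with rational linear parts (a ℤ-polytope). Then for any point ω₀ ∈ σ, the set (ω₀ + ℚⁿ) ∩ σ is dense in σ. -/
open Finset


/-- Real solutions of a rational homogeneous linear system are limits of rational solutions. -/
lemma ratKer_dense (n : ℕ) : ∀ (k : ℕ) (A : Fin k → Fin n → ℚ) (w : Fin n → ℝ),
    (∀ i, ∑ j, (A i j : ℝ) * w j = 0) →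
    w ∈ closure {x : Fin n → ℝ | ∃ q : Fin n → ℚ,
      (∀ j, x j = (q j : ℝ)) ∧ ∀ i, ∑ j, A i j * q j = 0} := by
  intro k
  induction k with
  | zero =>
    intro A w _
    rw [Metric.mem_closure_iff]
    intro ε hε
    have hq : ∀ j : Fin n, ∃ q : ℚ, |w j - (q : ℝ)| < ε := fun j => exists_rat_near (w j) hε
    choose q hqE using hq
    refine ⟨fun j => (q j : ℝ), ⟨q, fun j => rfl, fun i => i.elim0⟩, ?_⟩
    rw [dist_pi_lt_iff hε]
    intro j
    simpa [Real.dist_eq] using hqE j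
  | succ k IH =>
    intro A w hw
    by_cases h0 : ∀ j, A 0 j = 0
    · have := IH (fun i => A i.succ) w (fun i => hw i.succ)
      refine closure_mono ?_ this
      rintro x ⟨q, hxq, hq⟩
      refine ⟨q, hxq, fun i => ?_⟩
      refine Fin.cases ?_ (fun i' => hq i') i
      simp [h0]
    · push_neg at h0
      obtain ⟨j₀, hj₀⟩ := h0
      set a : Fin n → ℚ := A 0 with ha
      set B : Fin k → Fin n → ℚ := fun i j => A i.succ j - A i.succ j₀ / a j₀ * a j with hB
      have hBj₀ : ∀ i, B i j₀ = 0 := by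
        intro i; simp only [hB]; field_simp; ring
      have hwB : ∀ i, ∑ j, (B i j : ℝ) * w j = 0 := by
        intro i
        have : ∑ j, (B i j : ℝ) * w j
            = ∑ j, (A i.succ j : ℝ) * w j
              - ((A i.succ j₀ : ℝ) / (a j₀ : ℝ)) * ∑ j, (a j : ℝ) * w j := by
          rw [Finset.mul_sum, ← Finset.sum_sub_distrib]
          refine Finset.sum_congr rfl fun j _ => ?_
          simp only [hB]; push_cast; ring
        rw [this, hw i.succ, ha, hw 0]
        ring
      have hwclos := IH B w hwB
      set g : (Fin n → ℝ) → ℝ := fun x => -((a j₀ : ℝ))⁻¹ * ∑ j ∈ univ.erase j₀, (a j : ℝ) * x j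
        with hg
      set F : (Fin n → ℝ) → (Fin n → ℝ) := fun x => Function.update x j₀ (g x) with hF
      have hgcont : Continuous g := by
        apply Continuous.mul continuous_const
        exact continuous_finset_sum _ fun j _ => continuous_const.mul (continuous_apply j)
      have hFcont : Continuous F := by
        refine continuous_pi fun j => ?_
        by_cases hj : j = j₀
        · subst hj
          simpa [hF, Function.update_self] using hgcont
        · simp only [hF, Function.update_of_ne hj]
          exact continuous_apply j
      have hsum0 : ∀ x : Fin n → ℝ, (∑ j, (a j : ℝ) * x j)
          = (a j₀ : ℝ) * x j₀ + ∑ j ∈ univ.erase j₀, (a j : ℝ) * x j := by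
        intro x
        rw [← Finset.add_sum_erase _ _ (Finset.mem_univ j₀)]
      have haj : (a j₀ : ℝ) ≠ 0 := by exact_mod_cast hj₀
      have hgw : g w = w j₀ := by
        have h0' : ∑ j, (a j : ℝ) * w j = 0 := by rw [ha]; exact hw 0
        rw [hsum0 w] at h0'
        have he : ∑ j ∈ univ.erase j₀, (a j : ℝ) * w j = -((a j₀ : ℝ) * w j₀) := by linarith
        simp only [hg]
        rw [he]
        field_simp
      have hFw : F w = w := by
        funext j
        by_cases hj : j = j₀
        · subst hj
          simp only [hF, Function.update_self]
          exact hgw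
        · simp only [hF, Function.update_of_ne hj]
      have himg : F '' {x : Fin n → ℝ | ∃ q : Fin n → ℚ,
            (∀ j, x j = (q j : ℝ)) ∧ ∀ i, ∑ j, B i j * q j = 0}
          ⊆ {x : Fin n → ℝ | ∃ q : Fin n → ℚ,
            (∀ j, x j = (q j : ℝ)) ∧ ∀ i, ∑ j, A i j * q j = 0} := by
        rintro - ⟨x, ⟨q, hxq, hq⟩, rfl⟩
        set q' : Fin n → ℚ := Function.update q j₀ (-(a j₀)⁻¹ * ∑ j ∈ univ.erase j₀, a j * q j)
          with hq'
        have hq'j : ∀ j, j ≠ j₀ → q' j = q j := fun j hj => Function.update_of_ne hj _ _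
        have haj' : a j₀ ≠ 0 := hj₀
        have hgxq : g x = (q' j₀ : ℝ) := by
          rw [hq', Function.update_self]
          push_cast
          simp only [hg]
          congr 1
          exact Finset.sum_congr rfl fun j _ => by rw [hxq j]
        refine ⟨q', ?_, ?_⟩
        · intro j
          by_cases hj : j = j₀
          · show Function.update x j₀ (g x) j = _
            rw [hj, Function.update_self]
            exact hgxq
          · show Function.update x j₀ (g x) j = _
            rw [Function.update_of_ne hj, hxq j, hq'j j hj]
        · have hrow0 : ∑ j, a j * q' j = 0 := by
            rw [show (∑ j, a j * q' j) = a j₀ * q' j₀ + ∑ j ∈ univ.erase j₀, a j * q' j from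
              (Finset.add_sum_erase _ _ (Finset.mem_univ j₀)).symm]
            have he : ∑ j ∈ univ.erase j₀, a j * q' j = ∑ j ∈ univ.erase j₀, a j * q j :=
              Finset.sum_congr rfl fun j hj => by
                rw [hq'j j (Finset.ne_of_mem_erase hj)]
            rw [he, hq', Function.update_self]
            field_simp; ring
          intro i
          refine Fin.cases ?_ (fun i' => ?_) i
          · rw [← ha]; exact hrow0
          · have hBq' : ∑ j, B i' j * q' j = ∑ j, B i' j * q j :=
              Finset.sum_congr rfl fun j _ => by
                by_cases hj : j = j₀
                · subst hj; rw [hBj₀]; ring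
                · rw [hq'j j hj]
            have hsplit : ∑ j, A i'.succ j * q' j
                = ∑ j, B i' j * q' j + (A i'.succ j₀ / a j₀) * ∑ j, a j * q' j := by
              rw [Finset.mul_sum, ← Finset.sum_add_distrib]
              refine Finset.sum_congr rfl fun j _ => ?_
              simp only [hB]; field_simp; ring
            rw [hsplit, hrow0, hBq', hq i']
            ring
      have : F w ∈ closure {x : Fin n → ℝ | ∃ q : Fin n → ℚ,
          (∀ j, x j = (q j : ℝ)) ∧ ∀ i, ∑ j, A i j * q j = 0} :=
        closure_mono himg ((image_closure_subset_closure_image hFcont) ⟨w, hwclos, rfl⟩)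
      rwa [hFw] at this

lemma exists_pos_le_of_forall_pos {ι : Type*} [Fintype ι] (f : ι → ℝ) (hf : ∀ i, 0 < f i) :
    ∃ δ > 0, ∀ i, δ ≤ f i := by
  by_cases h : Nonempty ι
  · obtain ⟨i₀, -, hmin⟩ := Finset.exists_min_image Finset.univ f ⟨Classical.arbitrary ι,
      Finset.mem_univ _⟩
    exact ⟨f i₀, hf i₀, fun i => hmin i (Finset.mem_univ i)⟩
  · exact ⟨1, one_pos, fun i => absurd ⟨i⟩ h⟩

/-- Let `Γ ⊆ ℝ` be a dense additive subgroup containing a nonzero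
element, and let `σ ⊂ ℝⁿ` be a `ℤ`-polytope, i.e. a bounded set of the form
`{x | ∀ i, c i ≤ ⟨u i, x⟩}` with `u i ∈ ℤⁿ` and `c i ∈ ℝ`.  Then for any `ω₀ ∈ σ` the set
`(ω₀ + ℚⁿ) ∩ σ` is dense in `σ`. -/
theorem stmt17 (Γ : AddSubgroup ℝ) (hΓdense : Dense (Γ : Set ℝ))
    (hΓne : ∃ γ ∈ Γ, γ ≠ 0)
    (n k : ℕ) (u : Fin k → Fin n → ℤ) (c : Fin k → ℝ)
    (σ : Set (Fin n → ℝ))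
    (hσ : σ = {x | ∀ i : Fin k, c i ≤ ∑ j : Fin n, (u i j : ℝ) * x j})
    (hbdd : Bornology.IsBounded σ)
    (ω₀ : Fin n → ℝ) (hω₀ : ω₀ ∈ σ) :
    σ ⊆ closure {y | y ∈ σ ∧ ∃ q : Fin n → ℚ, ∀ j : Fin n, y j = ω₀ j + (q j : ℝ)} := by
  classical
  subst hσ
  intro x hx
  rw [Metric.mem_closure_iff]
  intro ε hε
  set w : Fin n → ℝ := fun j => x j - ω₀ j with hwdef
  set s : Fin k → ℝ := fun i => ∑ j, (u i j : ℝ) * w j with hs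
  set e : Fin k → ℝ := fun i => (∑ j, (u i j : ℝ) * ω₀ j) - c i with he
  have hω₀' : ∀ i, c i ≤ ∑ j, (u i j : ℝ) * ω₀ j := hω₀
  have hx' : ∀ i, c i ≤ ∑ j, (u i j : ℝ) * x j := hx
  have he0 : ∀ i, 0 ≤ e i := fun i => sub_nonneg.2 (hω₀' i)
  have hsx : ∀ i, s i = (∑ j, (u i j : ℝ) * x j) - (∑ j, (u i j : ℝ) * ω₀ j) := by
    intro i
    rw [hs, ← Finset.sum_sub_distrib]
    exact Finset.sum_congr rfl fun j _ => by rw [hwdef]; ring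
  have hse : ∀ i, -(e i) ≤ s i := by
    intro i
    rw [hsx i]
    simp only [he]
    have := hx' i
    linarith
  set M : ℝ := (∑ j, |w j|) + 1 with hM
  have hM0 : 0 < M := by
    have : (0:ℝ) ≤ ∑ j, |w j| := Finset.sum_nonneg fun j _ => abs_nonneg _
    linarith
  have hwM : ∀ j, |w j| ≤ M := by
    intro j
    have : |w j| ≤ ∑ j, |w j| :=
      Finset.single_le_sum (fun j _ => abs_nonneg (w j)) (Finset.mem_univ j)
    linarith
  set t : ℝ := 1 - min (1/2) (ε/(2*M)) with ht
  have htmin_pos : 0 < min (1/2) (ε/(2*M)) := lt_min (by norm_num) (by positivity)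
  have ht0 : 0 < t := by
    have : min (1/2 : ℝ) (ε/(2*M)) ≤ 1/2 := min_le_left _ _
    rw [ht]; linarith
  have ht1 : t < 1 := by rw [ht]; linarith
  have h1tM : ∀ j, (1-t) * |w j| ≤ ε/2 := by
    intro j
    have h1 : 1 - t ≤ ε/(2*M) := by rw [ht]; simpa using min_le_right (1/2 : ℝ) (ε/(2*M))
    have h2 : (1-t) * |w j| ≤ (ε/(2*M)) * M :=
      mul_le_mul h1 (hwM j) (abs_nonneg _) (by positivity)
    have h3 : (ε/(2*M)) * M = ε/2 := by field_simp
    linarith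
  set A : Fin k → Fin n → ℚ := fun i j => if s i = 0 then (u i j : ℚ) else 0 with hA
  set tw : Fin n → ℝ := fun j => t * w j with htw
  have htwA : ∀ i, ∑ j, (A i j : ℝ) * tw j = 0 := by
    intro i
    by_cases hsi : s i = 0
    · have : ∑ j, (A i j : ℝ) * tw j = t * s i := by
        rw [hs, Finset.mul_sum]
        refine Finset.sum_congr rfl fun j _ => ?_
        rw [hA, htw]
        simp only [if_pos hsi]
        push_cast
        ring
      rw [this, hsi, mul_zero]
    · simp [hA, hsi]
  have hclos := ratKer_dense n k A tw htwA
  set Mi : Fin k → ℝ := fun i => ∑ j, |(u i j : ℝ)| with hMi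
  have hMi0 : ∀ i, 0 ≤ Mi i := fun i => Finset.sum_nonneg fun j _ => abs_nonneg _
  have hρpos : ∀ i, 0 < (if s i = 0 then (1:ℝ) else (t * s i + e i)/(Mi i + 1)) := by
    intro i
    split_ifs with h
    · exact one_pos
    · refine div_pos ?_ (by linarith [hMi0 i])
      rcases lt_or_gt_of_ne h with hneg | hpos
      · nlinarith [mul_pos (show (0:ℝ) < 1 - t by linarith)
          (show (0:ℝ) < -(s i) by linarith), hse i]
      · nlinarith [mul_pos ht0 hpos, he0 i]
  obtain ⟨δ₁, hδ₁0, hδ₁⟩ := exists_pos_le_of_forall_pos _ hρpos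
  set δ : ℝ := min (ε/2) δ₁ with hδ
  have hδ0 : 0 < δ := lt_min (half_pos hε) hδ₁0
  obtain ⟨y₀, ⟨q, hy₀q, hqA⟩, hy₀d⟩ := Metric.mem_closure_iff.1 hclos δ hδ0
  have hqd : ∀ j, |(q j : ℝ) - t * w j| < δ := by
    intro j
    have h1 := dist_le_pi_dist tw y₀ j
    have h2 : dist (tw j) (y₀ j) < δ := lt_of_le_of_lt h1 hy₀d
    rw [hy₀q j, Real.dist_eq, htw] at h2
    rw [abs_sub_comm]
    simpa using h2
  refine ⟨fun j => ω₀ j + (q j : ℝ), ⟨?_, q, fun j => rfl⟩, ?_⟩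
  · intro i
    have hsplit : ∑ j, (u i j : ℝ) * (ω₀ j + (q j : ℝ))
        = (∑ j, (u i j : ℝ) * ω₀ j) + ∑ j, (u i j : ℝ) * (q j : ℝ) := by
      rw [← Finset.sum_add_distrib]
      exact Finset.sum_congr rfl fun j _ => by ring
    show c i ≤ ∑ j, (u i j : ℝ) * (ω₀ j + (q j : ℝ))
    rw [hsplit]
    by_cases hsi : s i = 0
    · have hz : ∑ j, (u i j : ℝ) * (q j : ℝ) = 0 := by
        have h1 := hqA i
        have h2 : ((∑ j, A i j * q j : ℚ) : ℝ) = 0 := by exact_mod_cast h1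
        push_cast at h2
        rw [← h2]
        refine Finset.sum_congr rfl fun j _ => ?_
        rw [hA]
        simp only [if_pos hsi]
        push_cast
        ring
      rw [hz, add_zero]
      exact hω₀' i
    · have hts : ∑ j, (u i j : ℝ) * (t * w j) = t * s i := by
        rw [hs, Finset.mul_sum]
        exact Finset.sum_congr rfl fun j _ => by ring
      have hdiff : |∑ j, (u i j : ℝ) * (q j : ℝ) - t * s i| ≤ Mi i * δ := by
        rw [← hts, ← Finset.sum_sub_distrib]
        calc |∑ j, ((u i j : ℝ) * (q j : ℝ) - (u i j : ℝ) * (t * w j))|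
            ≤ ∑ j, |(u i j : ℝ) * (q j : ℝ) - (u i j : ℝ) * (t * w j)| :=
              Finset.abs_sum_le_sum_abs _ _
          _ = ∑ j, |(u i j : ℝ)| * |(q j : ℝ) - t * w j| := by
              refine Finset.sum_congr rfl fun j _ => ?_
              rw [← abs_mul]
              congr 1
              ring
          _ ≤ ∑ j, |(u i j : ℝ)| * δ := by
              refine Finset.sum_le_sum fun j _ => ?_
              exact mul_le_mul_of_nonneg_left (le_of_lt (hqd j)) (abs_nonneg _)
          _ = Mi i * δ := by rw [hMi, Finset.sum_mul]
      have hδle : δ ≤ (t * s i + e i)/(Mi i + 1) := by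
        have := hδ₁ i
        rw [if_neg hsi] at this
        exact le_trans (min_le_right _ _) this
      have hnum : 0 < t * s i + e i := by
        rcases lt_or_gt_of_ne hsi with hneg | hpos
        · nlinarith [mul_pos (show (0:ℝ) < 1 - t by linarith)
            (show (0:ℝ) < -(s i) by linarith), hse i]
        · nlinarith [mul_pos ht0 hpos, he0 i]
      have hMi1 : (0:ℝ) < Mi i + 1 := by linarith [hMi0 i]
      have hMiδ : Mi i * δ ≤ t * s i + e i := by
        have h1 : Mi i * δ ≤ Mi i * ((t * s i + e i)/(Mi i + 1)) :=
          mul_le_mul_of_nonneg_left hδle (hMi0 i)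
        have h2 : Mi i * ((t * s i + e i)/(Mi i + 1))
            ≤ (Mi i + 1) * ((t * s i + e i)/(Mi i + 1)) :=
          mul_le_mul_of_nonneg_right (by linarith) (le_of_lt (div_pos hnum hMi1))
        have h3 : (Mi i + 1) * ((t * s i + e i)/(Mi i + 1)) = t * s i + e i := by
          field_simp
        exact le_trans (le_trans h1 h2) (le_of_eq h3)
      have habs := (abs_le.1 hdiff).1
      have heq : e i = (∑ j, (u i j : ℝ) * ω₀ j) - c i := by simp only [he]
      linarith
  · rw [dist_pi_lt_iff hε]
    intro j
    rw [Real.dist_eq]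
    have hsplit2 : x j - (ω₀ j + (q j : ℝ)) = (w j - t * w j) + (t * w j - (q j : ℝ)) := by
      simp only [hwdef]
      ring
    have h4 : |w j - t * w j| = (1-t) * |w j| := by
      rw [show w j - t * w j = (1-t) * (w j) by ring, abs_mul,
        abs_of_nonneg (show (0:ℝ) ≤ 1 - t by linarith)]
    have h5 : |t * w j - (q j : ℝ)| < δ := by
      rw [abs_sub_comm]
      exact hqd j
    have h6 : δ ≤ ε/2 := min_le_left _ _
    calc |x j - (ω₀ j + (q j : ℝ))| ≤ |w j - t * w j| + |t * w j - (q j : ℝ)| := by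
          rw [hsplit2]; exact abs_add_le _ _
      _ < (1-t) * |w j| + δ := by rw [h4]; linarith
      _ ≤ ε/2 + ε/2 := add_le_add (h1tM j) h6
      _ = ε := by ring
end

section
/- Let E and F be graded fields over a graded field k (commutative graded rings in which every nonzero homogeneous element is invertible), and suppose A is a graded k-algebra that is an integral domain and is finite-dimensional as a module over a graded subfield E′ ⊆ A which is a graded field. Then A is itself a graded field. -/
/-- Graded analogue of "a domain finite over a field is a field".  Let `A`
be a commutative ring graded by an abelian group `ι` (e.g. `ι = ℝ`), which is a graded
`k`-algebra and an integral domain in the graded sense (no zero divisors among homogeneous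
elements).  Suppose `A` contains a graded (i.e. homogeneous) subring `E′` which is a graded
field — every nonzero homogeneous element of `E′` is invertible in `E′` — and that `A` is a
finite `E′`-module.  Then `A` is itself a graded field: every nonzero homogeneous element
of `A` is a unit. -/
theorem stmt19 (ι : Type*) [AddCommGroup ι] [DecidableEq ι]
    (k A : Type*) [CommRing k] [CommRing A] [Algebra k A]
    (𝒜 : ι → AddSubgroup A) [GradedRing 𝒜]
    (hdom : ∀ a b : A, SetLike.IsHomogeneousElem 𝒜 a → SetLike.IsHomogeneousElem 𝒜 b →
      a * b = 0 → a = 0 ∨ b = 0)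
    (E' : Subalgebra k A)
    (hE'hom : ∀ a ∈ E', ∀ i : ι, ((DirectSum.decompose 𝒜 a i : 𝒜 i) : A) ∈ E')
    (hE'field : ∀ a ∈ E', SetLike.IsHomogeneousElem 𝒜 a → a ≠ 0 → ∃ b ∈ E', a * b = 1)
    [Module.Finite E' A] :
    ∀ a : A, SetLike.IsHomogeneousElem 𝒜 a → a ≠ 0 → IsUnit a := by
  intro a ha hane
  obtain ⟨d, had⟩ := ha
  have hnt : Nontrivial A := nontrivial_of_ne a 0 hane
  -- Key induction: a homogeneous relation with unit leading coefficient forces `a` to be a unit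
  have key : ∀ n : ℕ, ∀ c : ℕ → A,
      (∀ j, c j ∈ E') → (∀ j, c j ∈ 𝒜 (n • d - j • d)) → c n = 1 →
      ∑ j ∈ Finset.range (n + 1), c j * a ^ j = 0 → IsUnit a := by
    intro n
    induction n with
    | zero =>
      intro c _ _ hc0 hsum
      simp [hc0] at hsum
    | succ n ih =>
      intro c hcE hcdeg hctop hsum
      rw [Finset.sum_range_succ'] at hsum
      have hfac : ∑ j ∈ Finset.range (n + 1), c (j + 1) * a ^ (j + 1)
          = a * ∑ j ∈ Finset.range (n + 1), c (j + 1) * a ^ j := by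
        rw [Finset.mul_sum]
        exact Finset.sum_congr rfl fun j _ => by ring
      by_cases h0 : c 0 = 0
      · rw [h0, zero_mul, add_zero, hfac] at hsum
        have hhom_sum : (∑ j ∈ Finset.range (n + 1), c (j + 1) * a ^ j) ∈ 𝒜 (n • d) := by
          refine AddSubgroup.sum_mem _ fun j _ => ?_
          have hm := SetLike.mul_mem_graded (hcdeg (j + 1)) (SetLike.pow_mem_graded j had)
          have he : (n + 1) • d - (j + 1) • d + j • d = n • d := by
            simp only [succ_nsmul]; abel
          rwa [he] at hm
        rcases hdom a _ ⟨d, had⟩ ⟨_, hhom_sum⟩ hsum with h | h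
        · exact absurd h hane
        · refine ih (fun j => c (j + 1)) (fun j => hcE _) (fun j => ?_) hctop h
          have he : n • d - j • d = (n + 1) • d - (j + 1) • d := by
            simp only [succ_nsmul]; abel
          rw [he]; exact hcdeg (j + 1)
      · obtain ⟨b, hbE, hb⟩ := hE'field (c 0) (hcE 0) ⟨_, hcdeg 0⟩ h0
        rw [pow_zero, mul_one] at hsum
        have hc0eq : c 0 = a * (-∑ j ∈ Finset.range (n + 1), c (j + 1) * a ^ j) := by
          rw [mul_neg, ← hfac]
          exact eq_neg_of_add_eq_zero_right hsum
        refine IsUnit.of_mul_eq_one (a := a) ((-∑ j ∈ Finset.range (n + 1), c (j + 1) * a ^ j) * b) ?_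
        rw [← mul_assoc, ← hc0eq, hb]
  -- `a` is integral over `E'` since `A` is a finite `E'`-module
  have hint : Algebra.IsIntegral E' A := Algebra.IsIntegral.of_finite E' A
  obtain ⟨p, hmonic, hp⟩ := hint.isIntegral a
  set n := p.natDegree with hn
  have hsum : ∑ j ∈ Finset.range (n + 1), (algebraMap E' A (p.coeff j)) * a ^ j = 0 := by
    calc ∑ j ∈ Finset.range (n + 1), (algebraMap E' A (p.coeff j)) * a ^ j
        = ∑ j ∈ Finset.range (n + 1), p.coeff j • a ^ j :=
          Finset.sum_congr rfl fun j _ => (Algebra.smul_def _ _).symm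
      _ = 0 := by rw [← Polynomial.aeval_eq_sum_range, Polynomial.aeval_def, hp]
  set c : ℕ → A := fun j =>
    ((DirectSum.decompose 𝒜 (algebraMap E' A (p.coeff j)) (n • d - j • d) : 𝒜 _) : A) with hc
  have hmem : ∀ (x : E'), algebraMap E' A x ∈ E' := fun x => x.2
  refine key n c (fun j => hE'hom _ (hmem _) _) (fun j => SetLike.coe_mem _) ?_ ?_
  · -- leading coefficient is 1
    have h1 : algebraMap E' A (p.coeff n) = 1 := by
      rw [hmonic.coeff_natDegree, map_one]
    have h0 : (1 : A) ∈ 𝒜 (n • d - n • d) := by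
      rw [sub_self]; exact SetLike.one_mem_graded 𝒜
    simp only [hc, h1]
    exact DirectSum.decompose_of_mem_same 𝒜 h0
  · -- the degree-(n • d) component of the integrality relation
    have h := congrArg (fun x => ((DirectSum.decompose 𝒜 x (n • d) : 𝒜 (n • d)) : A)) hsum
    simp only [DirectSum.decompose_zero, DirectSum.zero_apply, ZeroMemClass.coe_zero] at h
    rw [DirectSum.decompose_sum] at h
    rw [DFinsupp.finset_sum_apply] at h
    rw [AddSubmonoidClass.coe_finset_sum] at h
    rw [← h]
    refine Finset.sum_congr rfl fun j _ => ?_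
    have hpow := SetLike.pow_mem_graded j had (A := 𝒜)
    have he : n • d = (n • d - j • d) + j • d := by abel
    rw [he]
    exact (DirectSum.coe_decompose_mul_add_of_right_mem 𝒜 hpow).symm
end
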